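/- arXiv:2303.05690 — 3 statements merged into one kernel-verified Lean document; each statement's English description precedes it below -/
import Mathlib

section
/- For every real number t and every real number s with |s| ≥ e^(1/4^(1/3)), the inequality s·t ≤ t²·(e^(t²) − 1) + |s|·(log|s|)^(1/2) holds. -/
/-- Souza–do Ó inequality: for all `t` and `|s| ≥ exp(4^(-1/3))`,
`s·t ≤ t²(e^{t²} − 1) + |s|·√(log|s|)`. -/
theorem stmt_0 (t s : ℝ) (hs : |s| ≥ Real.exp ((4:ℝ) ^ (-(1/3 : ℝ)))) :
    s * t ≤ t ^ 2 * (Real.exp (t ^ 2) - 1) + |s| * Real.sqrt (Real.log |s|) := by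
  set c : ℝ := (4:ℝ) ^ (-(1/3 : ℝ)) with hc
  have hc3 : c ^ 3 = 1/4 := by
    rw [hc, ← Real.rpow_natCast ((4:ℝ) ^ (-(1/3:ℝ))) 3, ← Real.rpow_mul (by norm_num)]
    norm_num
  have hc0 : 0 < c := Real.rpow_pos_of_pos (by norm_num) _
  have hclb : (0.62:ℝ) ≤ c := by
    nlinarith [hc3, hc0, sq_nonneg (c - 0.62), sq_nonneg (c + 0.62)]
  set A := |s| with hA
  have hA0 : 0 < A := lt_of_lt_of_le (Real.exp_pos c) hs
  have hlogA : c ≤ Real.log A := by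
    rw [Real.le_log_iff_exp_le hA0]; exact hs
  have hlog0 : (0:ℝ) ≤ Real.log A := le_trans (le_of_lt hc0) hlogA
  set L := Real.sqrt (Real.log A) with hL
  have hL2 : L ^ 2 = Real.log A := Real.sq_sqrt hlog0
  have hLnn : 0 ≤ L := Real.sqrt_nonneg _
  have hLlb : (0.78:ℝ) ≤ L := by nlinarith [hL2, hlogA, hclb, hLnn]
  have hA1 : (1.62:ℝ) ≤ A := by
    have h := Real.add_one_le_exp c
    linarith [hs, hclb]
  have key : A * |t| ≤ t ^ 2 * (Real.exp (t ^ 2) - 1) + A * L := by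
    rcases le_or_gt |t| L with h | h
    · have h1 : 0 ≤ t ^ 2 * (Real.exp (t ^ 2) - 1) := by
        have := Real.one_le_exp (sq_nonneg t)
        nlinarith [sq_nonneg t]
      nlinarith [hA0]
    · have hxx : |t| ^ 2 = t ^ 2 := sq_abs t
      have ht2 : L ^ 2 ≤ t ^ 2 := by nlinarith [abs_nonneg t, hLlb]
      have hexp : A ≤ Real.exp (t ^ 2) := by
        calc A = Real.exp (Real.log A) := (Real.exp_log hA0).symm
        _ ≤ Real.exp (t ^ 2) := Real.exp_le_exp.mpr (by rw [← hL2]; exact ht2)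
      have hdisc : A ≤ 4 * (A - 1) * L := by nlinarith
      have hdisc2 : 0 ≤ A * (4 * (A - 1) * L - A) := mul_nonneg hA0.le (by linarith)
      have hprod : 0 ≤ t ^ 2 * (Real.exp (t ^ 2) - A) :=
        mul_nonneg (sq_nonneg t) (by linarith)
      nlinarith [sq_nonneg (2*(A-1)*|t| - A), abs_nonneg t, hA1, hLlb, hxx,
        sq_nonneg t, hdisc2, hprod]
  calc s * t ≤ |s * t| := le_abs_self _
    _ = A * |t| := abs_mul s t
    _ ≤ _ := key
end

section
/- Let 1 < p < ∞ and β ≥ 1. For all nonnegative reals a, b, m, setting a_m = min{a,m} and b_m = min{b,m}, one has |a−b|^(p−2)·(a−b)·(a_m^β − b_m^β) ≥ (β p^p / (β+p−1)^p) · (a_m^((β+p−1)/p) − b_m^((β+p−1)/p))^p. -/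
open MeasureTheory Real Set

open MeasureTheory Real Set

/-- Core scalar inequality via Hölder: for `0 ≤ B ≤ A`,
`(A^γ - B^γ)^p ≤ γ^p/β * ((A-B)^(p-1) * (A^β - B^β))` with `γ = (β+p-1)/p`. -/
lemma blp_core (p β A B : ℝ) (hp : 1 < p) (hβ : 1 ≤ β) (hB : 0 ≤ B) (hBA : B ≤ A) :
    (A ^ ((β + p - 1) / p) - B ^ ((β + p - 1) / p)) ^ p ≤
      ((β + p - 1) / p) ^ p / β * ((A - B) ^ (p - 1) * (A ^ β - B ^ β)) := by
  have hA : 0 ≤ A := hB.trans hBA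
  have hp0 : (0:ℝ) < p := by linarith
  have hβ0 : (0:ℝ) < β := by linarith
  set r : ℝ := (β - 1) / p with hr
  have hr0 : 0 ≤ r := div_nonneg (by linarith) (by linarith)
  have hpne : p ≠ 0 := hp0.ne'
  have hγ : (β + p - 1) / p = r + 1 := by rw [hr]; field_simp; ring
  have hγ0 : (0:ℝ) < r + 1 := by linarith
  have hrp : r * p = β - 1 := by rw [hr, div_mul_cancel₀ _ hpne]
  set q : ℝ := p / (p - 1) with hq
  have hpq : p.HolderConjugate q := Real.HolderConjugate.conjExponent hp
  have hq0 : 0 < q := hpq.symm.pos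
  set μ : Measure ℝ := volume.restrict (Ioc B A) with hμ
  have hmeas : Measurable fun t : ℝ => t ^ r := (Real.continuous_rpow_const hr0).measurable
  have hf : MemLp (fun t : ℝ => t ^ r) (ENNReal.ofReal p) μ := by
    refine MemLp.of_bound hmeas.aestronglyMeasurable (A ^ r) ?_
    filter_upwards [ae_restrict_mem measurableSet_Ioc] with x hx
    rw [Real.norm_of_nonneg (Real.rpow_nonneg (hB.trans hx.1.le) r)]
    exact Real.rpow_le_rpow (hB.trans hx.1.le) hx.2 hr0
  have hg : MemLp (fun _ : ℝ => (1:ℝ)) (ENNReal.ofReal q) μ := memLp_const 1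
  have hf_nn : 0 ≤ᵐ[μ] fun t : ℝ => t ^ r := by
    filter_upwards [ae_restrict_mem measurableSet_Ioc] with x hx
    exact Real.rpow_nonneg (hB.trans hx.1.le) r
  have holder := integral_mul_le_Lp_mul_Lq_of_nonneg hpq hf_nn
    (Filter.Eventually.of_forall fun _ => zero_le_one) hf hg
  simp only [mul_one, Real.one_rpow] at holder
  -- compute the three integrals
  have hI1 : ∫ t, t ^ r ∂μ = (A ^ (r + 1) - B ^ (r + 1)) / (r + 1) := by
    rw [hμ, ← intervalIntegral.integral_of_le hBA, integral_rpow (Or.inl (by linarith))]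
  have hI2 : ∫ t, (t ^ r) ^ p ∂μ = (A ^ β - B ^ β) / β := by
    rw [hμ, setIntegral_congr_fun measurableSet_Ioc
      (g := fun t : ℝ => t ^ (β - 1))
      (fun t ht => by rw [← Real.rpow_mul (hB.trans ht.1.le), hrp]),
      ← intervalIntegral.integral_of_le hBA, integral_rpow (Or.inl (by linarith))]
    norm_num
  have hI3 : (∫ _ : ℝ, (1:ℝ) ∂μ) = A - B := by
    simp [hμ, Real.volume_Ioc, ENNReal.toReal_ofReal (sub_nonneg.2 hBA), hBA]
  rw [hI1, hI2, hI3] at holder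
  -- raise Hölder to the p-th power
  set X : ℝ := (A ^ β - B ^ β) / β with hX
  set Y : ℝ := A - B with hY
  have hX0 : 0 ≤ X :=
    div_nonneg (sub_nonneg.2 (Real.rpow_le_rpow hB hBA hβ0.le)) hβ0.le
  have hY0 : 0 ≤ Y := sub_nonneg.2 hBA
  have hI0 : 0 ≤ (A ^ (r + 1) - B ^ (r + 1)) / (r + 1) :=
    div_nonneg (sub_nonneg.2 (Real.rpow_le_rpow hB hBA hγ0.le)) hγ0.le
  have key : ((A ^ (r + 1) - B ^ (r + 1)) / (r + 1)) ^ p ≤ X * Y ^ (p - 1) := by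
    calc ((A ^ (r + 1) - B ^ (r + 1)) / (r + 1)) ^ p
        ≤ (X ^ (1/p) * Y ^ (1/q)) ^ p := Real.rpow_le_rpow hI0 holder hp0.le
      _ = (X ^ (1/p)) ^ p * (Y ^ (1/q)) ^ p :=
          Real.mul_rpow (Real.rpow_nonneg hX0 _) (Real.rpow_nonneg hY0 _)
      _ = X * Y ^ (p - 1) := by
          rw [← Real.rpow_mul hX0, ← Real.rpow_mul hY0, one_div_mul_cancel hp0.ne',
            Real.rpow_one]
          congr 1
          rw [hq]
          field_simp
  rw [hγ]
  set E : ℝ := A ^ (r + 1) - B ^ (r + 1) with hE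
  set I : ℝ := E / (r + 1) with hI
  have hfact : E = (r + 1) * I := by rw [hI]; field_simp
  calc E ^ p
      = (r + 1) ^ p * I ^ p := by
        rw [hfact, Real.mul_rpow hγ0.le hI0]
    _ ≤ (r + 1) ^ p * (X * Y ^ (p - 1)) :=
        mul_le_mul_of_nonneg_left key (Real.rpow_nonneg hγ0.le p)
    _ = (r + 1) ^ p / β * (Y ^ (p - 1) * (A ^ β - B ^ β)) := by
        rw [hX]; ring

/-- The symmetric form of the inequality, for `b ≤ a`. -/
lemma blp_helper (p β a b m : ℝ) (hp : 1 < p) (hβ : 1 ≤ β)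
    (hb : 0 ≤ b) (hm : 0 ≤ m) (hba : b ≤ a) :
    β * p ^ p / (β + p - 1) ^ p *
        |min a m ^ ((β + p - 1) / p) - min b m ^ ((β + p - 1) / p)| ^ p ≤
      |a - b| ^ (p - 2) * (a - b) * (min a m ^ β - min b m ^ β) := by
  have hp0 : (0:ℝ) < p := by linarith
  have hβ0 : (0:ℝ) < β := by linarith
  set A : ℝ := min a m with hA
  set B : ℝ := min b m with hB
  have hB0 : 0 ≤ B := le_min hb hm
  have hBA : B ≤ A := min_le_min hba le_rfl
  have hA0 : 0 ≤ A := hB0.trans hBA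
  have hsub : A - B ≤ a - b := by
    rcases le_total a m with h | h <;> rcases le_total b m with h' | h' <;>
      simp [hA, hB, min_eq_left, min_eq_right, *] <;> linarith
  have hγpos : (0:ℝ) < (β + p - 1) / p := div_pos (by linarith) hp0
  have habs : |A ^ ((β + p - 1) / p) - B ^ ((β + p - 1) / p)| =
      A ^ ((β + p - 1) / p) - B ^ ((β + p - 1) / p) :=
    abs_of_nonneg (sub_nonneg.2 (Real.rpow_le_rpow hB0 hBA hγpos.le))
  rw [habs]
  rcases eq_or_lt_of_le hba with rfl | hlt
  · have : A = B := rfl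
    simp [this, Real.zero_rpow hp0.ne']
  · have hab0 : 0 < a - b := sub_pos.2 hlt
    have hLHS : |a - b| ^ (p - 2) * (a - b) = (a - b) ^ (p - 1) := by
      rw [abs_of_pos hab0, show p - 1 = p - 2 + 1 by ring,
        Real.rpow_add_one hab0.ne']
    rw [hLHS]
    have hcore := blp_core p β A B hp hβ hB0 hBA
    have hC : β * p ^ p / (β + p - 1) ^ p = β / ((β + p - 1) / p) ^ p := by
      rw [Real.div_rpow (by linarith) hp0.le, div_div_eq_mul_div]
    have hCpos : 0 < β / ((β + p - 1) / p) ^ p :=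
      div_pos hβ0 (Real.rpow_pos_of_pos hγpos p)
    rw [hC]
    calc β / ((β + p - 1) / p) ^ p * (A ^ ((β + p - 1) / p) - B ^ ((β + p - 1) / p)) ^ p
        ≤ β / ((β + p - 1) / p) ^ p *
            (((β + p - 1) / p) ^ p / β * ((A - B) ^ (p - 1) * (A ^ β - B ^ β))) :=
          mul_le_mul_of_nonneg_left hcore hCpos.le
      _ = (A - B) ^ (p - 1) * (A ^ β - B ^ β) := by
          field_simp
      _ ≤ (a - b) ^ (p - 1) * (A ^ β - B ^ β) := by
          have h1 : (A - B) ^ (p - 1) ≤ (a - b) ^ (p - 1) :=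
            Real.rpow_le_rpow (sub_nonneg.2 hBA) hsub (by linarith)
          have h2 : 0 ≤ A ^ β - B ^ β :=
            sub_nonneg.2 (Real.rpow_le_rpow hB0 hBA hβ0.le)
          exact mul_le_mul_of_nonneg_right h1 h2

/-- Brasco–Lindgren–Parini, Lemma C.1. -/
theorem stmt_1 (p β : ℝ) (hp : 1 < p) (hβ : 1 ≤ β)
    (a b m : ℝ) (ha : 0 ≤ a) (hb : 0 ≤ b) (hm : 0 ≤ m) :
    |a - b| ^ (p - 2) * (a - b) * (min a m ^ β - min b m ^ β) ≥
      (β * p ^ p / (β + p - 1) ^ p) *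
        (min a m ^ ((β + p - 1) / p) - min b m ^ ((β + p - 1) / p)) ^ p := by
  have hp0 : (0:ℝ) < p := by linarith
  have hC0 : 0 ≤ β * p ^ p / (β + p - 1) ^ p := by
    have h1 : (0:ℝ) ≤ p ^ p := Real.rpow_nonneg hp0.le p
    have h2 : (0:ℝ) ≤ (β + p - 1) ^ p := Real.rpow_nonneg (by linarith) p
    positivity
  have step1 : (β * p ^ p / (β + p - 1) ^ p) *
        (min a m ^ ((β + p - 1) / p) - min b m ^ ((β + p - 1) / p)) ^ p ≤
      (β * p ^ p / (β + p - 1) ^ p) *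
        |min a m ^ ((β + p - 1) / p) - min b m ^ ((β + p - 1) / p)| ^ p :=
    mul_le_mul_of_nonneg_left
      ((le_abs_self _).trans (Real.abs_rpow_le_abs_rpow _ _)) hC0
  refine le_trans step1 ?_
  rcases le_total b a with hba | hab
  · exact blp_helper p β a b m hp hβ hb hm hba
  · have h := blp_helper p β b a m hp hβ ha hm hab
    have e1 : |min a m ^ ((β + p - 1) / p) - min b m ^ ((β + p - 1) / p)| =
        |min b m ^ ((β + p - 1) / p) - min a m ^ ((β + p - 1) / p)| := abs_sub_comm _ _
    have e2 : |a - b| ^ (p - 2) * (a - b) * (min a m ^ β - min b m ^ β) =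
        |b - a| ^ (p - 2) * (b - a) * (min b m ^ β - min a m ^ β) := by
      rw [abs_sub_comm]; ring
    rw [e1, e2]
    exact h
end

section
/- Fix r₁ > 0 and for n ≥ 2 define the Moser function ω_n : ℝ → ℝ by ω_n(x) = (log n)^(1/2) if |x| ≤ r₁/n, ω_n(x) = log(r₁/|x|)/(log n)^(1/2) if r₁/n ≤ |x| ≤ r₁, and ω_n(x) = 0 if |x| ≥ r₁. Then ‖ω_n‖²_{L²(ℝ)} = O(1/log n) as n → ∞; more precisely ‖ω_n‖²_{L²} = 4r₁/log n + o(1/log n). -/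
open Filter Asymptotics MeasureTheory Set intervalIntegral

-- antiderivative lemma
lemma moser_int_log_sq (r₁ a : ℝ) (ha : 0 < a) (har : a ≤ r₁) :
    ∫ t in a..r₁, (Real.log r₁ - Real.log t) ^ 2 =
      2 * r₁ - a * ((Real.log r₁ - Real.log a) ^ 2
        + 2 * (Real.log r₁ - Real.log a) + 2) := by
  set c := Real.log r₁ with hc
  have hpos : ∀ t ∈ Set.uIcc a r₁, 0 < t := by
    intro t ht
    rw [Set.uIcc_of_le har] at ht
    exact lt_of_lt_of_le ha ht.1
  have hderiv : ∀ t ∈ Set.uIcc a r₁,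
      HasDerivAt (fun t => t * ((c - Real.log t) ^ 2 + 2 * (c - Real.log t) + 2))
        ((c - Real.log t) ^ 2) t := by
    intro t ht
    have ht0 : t ≠ 0 := ne_of_gt (hpos t ht)
    have hlog : HasDerivAt Real.log t⁻¹ t := Real.hasDerivAt_log ht0
    have h1 : HasDerivAt (fun t => c - Real.log t) (-t⁻¹) t := by
      have := (hasDerivAt_const t c).sub hlog
      rw [zero_sub] at this
      exact this
    have h2 : HasDerivAt (fun t => (c - Real.log t) ^ 2)
        (2 * (c - Real.log t) * (-t⁻¹)) t := by
      have := h1.pow 2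
      exact this.congr_deriv (by norm_num)
    have h3 : HasDerivAt (fun t => (c - Real.log t) ^ 2 + 2 * (c - Real.log t) + 2)
        (2 * (c - Real.log t) * (-t⁻¹) + 2 * (-t⁻¹)) t := by
      simpa using (h2.add (h1.const_mul 2)).add_const 2
    have h4 := (hasDerivAt_id t).mul h3
    refine h4.congr_deriv ?_
    simp only [id_eq]
    field_simp
    ring
  have hcont : IntervalIntegrable (fun t => (c - Real.log t) ^ 2) volume a r₁ := by
    apply ContinuousOn.intervalIntegrable
    apply ContinuousOn.pow
    exact (continuousOn_const.sub (Real.continuousOn_log.mono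
      (fun t ht => ne_of_gt (hpos t ht))))
  have := intervalIntegral.integral_eq_sub_of_hasDerivAt hderiv hcont
  rw [this]
  simp
  ring

lemma moser_integral (r₁ : ℝ) (hr : 0 < r₁) (n : ℕ) (hn : 2 ≤ n)
    (ω : ℕ → ℝ → ℝ)
    (hω : ∀ x : ℝ,
      ω n x = if |x| ≤ r₁ / n then Real.sqrt (Real.log n)
        else if |x| ≤ r₁ then Real.log (r₁ / |x|) / Real.sqrt (Real.log n)
        else 0) :
    (∫ x : ℝ, (ω n x) ^ 2) =
      4 * r₁ / Real.log n - 4 * (r₁ / n) - 4 * (r₁ / n) / Real.log n := by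
  set L := Real.log n with hLdef
  set a := r₁ / n with hadef
  have hn1 : (1 : ℝ) < n := by exact_mod_cast hn.trans_lt' one_lt_two
  have hL : 0 < L := Real.log_pos hn1
  have hL0 : L ≠ 0 := ne_of_gt hL
  have hn0 : (0 : ℝ) < n := by positivity
  have ha : 0 < a := by positivity
  have har : a ≤ r₁ := div_le_self hr.le (by exact_mod_cast hn1.le)
  -- define the radial profile
  set g : ℝ → ℝ := fun t => if t ≤ a then L
      else if t ≤ r₁ then (Real.log (r₁ / t)) ^ 2 / L else 0 with hgdef
  have hsq : ∀ x : ℝ, (ω n x) ^ 2 = g |x| := by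
    intro x
    rw [hω x]
    by_cases h1 : |x| ≤ a
    · simp only [hgdef, h1, if_true]
      exact Real.sq_sqrt hL.le
    · by_cases h2 : |x| ≤ r₁
      · simp only [hgdef, h1, h2, if_false, if_true]
        rw [div_pow, Real.sq_sqrt hL.le]
      · simp [hgdef, h1, h2]
  have key : (∫ x : ℝ, (ω n x) ^ 2) = 2 * ∫ t in Ioi (0:ℝ), g t := by
    rw [show (fun x : ℝ => (ω n x) ^ 2) = fun x => g |x| from funext hsq]
    exact integral_comp_abs
  -- integrability on pieces
  have hmeas1 : MeasurableSet (Ioc (0:ℝ) a) := measurableSet_Ioc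
  have hmeas2 : MeasurableSet (Ioc a r₁) := measurableSet_Ioc
  have hmeas3 : MeasurableSet (Ioi r₁) := measurableSet_Ioi
  have heq1 : EqOn g (fun _ => L) (Ioc (0:ℝ) a) := fun t ht => by
    simp [hgdef, ht.2]
  have heq2 : EqOn g (fun t => (Real.log (r₁ / t)) ^ 2 / L) (Ioc a r₁) := fun t ht => by
    simp [hgdef, not_le.mpr ht.1, ht.2]
  have heq3 : EqOn g (fun _ => (0:ℝ)) (Ioi r₁) := fun t ht => by
    have h1 : ¬ t ≤ a := not_le.mpr (lt_of_le_of_lt har ht)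
    have h2 : ¬ t ≤ r₁ := not_le.mpr ht
    simp [hgdef, h1, h2]
  have hcont2 : ContinuousOn (fun t => (Real.log (r₁ / t)) ^ 2 / L) (Icc a r₁) := by
    apply ContinuousOn.div_const
    apply ContinuousOn.pow
    apply Real.continuousOn_log.comp
    · exact continuousOn_const.div continuousOn_id
        (fun t ht => ne_of_gt (lt_of_lt_of_le ha ht.1))
    · intro t ht
      have : 0 < r₁ / t := div_pos hr (lt_of_lt_of_le ha ht.1)
      simp [Set.mem_compl_iff, ne_of_gt this]
  have hint1 : IntegrableOn g (Ioc (0:ℝ) a) :=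
    (((integrableOn_const_iff).mpr (Or.inr (by simp [Real.volume_Ioc]))).congr_fun
      heq1.symm hmeas1)
  have hint2 : IntegrableOn g (Ioc a r₁) :=
    ((hcont2.integrableOn_Icc).mono_set Ioc_subset_Icc_self).congr_fun heq2.symm hmeas2
  have hint3 : IntegrableOn g (Ioi r₁) :=
    (integrableOn_zero).congr_fun heq3.symm hmeas3
  -- split the integral
  have hsplit1 : Ioi (0:ℝ) = Ioc 0 r₁ ∪ Ioi r₁ := (Ioc_union_Ioi_eq_Ioi hr.le).symm
  have hsplit2 : Ioc (0:ℝ) r₁ = Ioc 0 a ∪ Ioc a r₁ := (Ioc_union_Ioc_eq_Ioc ha.le har).symm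
  have hI : ∫ t in Ioi (0:ℝ), g t =
      (∫ t in Ioc (0:ℝ) a, g t) + (∫ t in Ioc a r₁, g t) + (∫ t in Ioi r₁, g t) := by
    rw [hsplit1, setIntegral_union (Ioc_disjoint_Ioi le_rfl) hmeas3
        (by rw [hsplit2]; exact hint1.union hint2) hint3, hsplit2,
      setIntegral_union (Ioc_disjoint_Ioc_of_le le_rfl) hmeas2 hint1 hint2]
  have hI1 : ∫ t in Ioc (0:ℝ) a, g t = a * L := by
    rw [setIntegral_congr_fun hmeas1 heq1, setIntegral_const]
    simp [Real.volume_Ioc, ENNReal.toReal_ofReal ha.le, ha.le]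
  have hI2 : ∫ t in Ioc a r₁, g t = (2 * r₁ - a * (L ^ 2 + 2 * L + 2)) / L := by
    rw [setIntegral_congr_fun hmeas2 heq2]
    have heqlog : EqOn (fun t => (Real.log (r₁ / t)) ^ 2 / L)
        (fun t => (Real.log r₁ - Real.log t) ^ 2 / L) (Ioc a r₁) := fun t ht => by
      dsimp only
      rw [Real.log_div (ne_of_gt hr) (ne_of_gt (lt_of_lt_of_le ha ht.1.le))]
    rw [setIntegral_congr_fun hmeas2 heqlog]
    rw [MeasureTheory.integral_div, ← intervalIntegral.integral_of_le har,
      moser_int_log_sq r₁ a ha har]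
    have hlogA : Real.log r₁ - Real.log a = L := by
      rw [hadef, Real.log_div (ne_of_gt hr) (ne_of_gt hn0)]
      ring
    rw [hlogA]
  have hI3 : ∫ t in Ioi r₁, g t = 0 := by
    rw [setIntegral_congr_fun hmeas3 heq3]; simp
  rw [key, hI, hI1, hI2, hI3]
  field_simp
  ring

/-- L²-asymptotics of the Moser sequence: `‖ω_n‖²_{L²} = 4r₁/log n + o(1/log n)`. -/
theorem stmt_9 (r₁ : ℝ) (hr : 0 < r₁)
    (ω : ℕ → ℝ → ℝ)
    (hω : ∀ n : ℕ, 2 ≤ n → ∀ x : ℝ,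
      ω n x = if |x| ≤ r₁ / n then Real.sqrt (Real.log n)
        else if |x| ≤ r₁ then Real.log (r₁ / |x|) / Real.sqrt (Real.log n)
        else 0) :
    (fun n : ℕ => (∫ x : ℝ, (ω n x) ^ 2) - 4 * r₁ / Real.log n)
      =o[atTop] fun n : ℕ => 1 / Real.log n := by
  have hEq : ∀ᶠ n : ℕ in atTop,
      (∫ x : ℝ, (ω n x) ^ 2) - 4 * r₁ / Real.log n
        = -(4 * (r₁ / n)) - 4 * (r₁ / n) / Real.log n := by
    filter_upwards [eventually_ge_atTop 2] with n hn
    rw [moser_integral r₁ hr n hn ω (hω n hn)]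
    ring
  have htarget : (fun n : ℕ => -(4 * (r₁ / n)) - 4 * (r₁ / n) / Real.log n)
      =o[atTop] fun n : ℕ => 1 / Real.log n := by
    rw [isLittleO_iff_tendsto']
    · have h1 : Tendsto (fun n : ℕ => Real.log n / n) atTop (nhds 0) :=
        (Real.isLittleO_log_id_atTop.tendsto_div_nhds_zero).comp
          tendsto_natCast_atTop_atTop
      have h2 : Tendsto (fun n : ℕ => (1:ℝ) / n) atTop (nhds 0) :=
        tendsto_one_div_atTop_nhds_zero_nat
      have h3 : Tendsto (fun n : ℕ =>
          -(4 * r₁ * (Real.log n / n)) - 4 * r₁ * (1 / n)) atTop (nhds 0) := by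
        have := ((h1.const_mul (4 * r₁)).neg).sub (h2.const_mul (4 * r₁))
        simpa using this
      apply h3.congr'
      filter_upwards [eventually_ge_atTop 2] with n hn
      have hn1 : (1 : ℝ) < n := by exact_mod_cast hn.trans_lt' one_lt_two
      have hL : 0 < Real.log n := Real.log_pos hn1
      have hn0 : (n:ℝ) ≠ 0 := by positivity
      field_simp
    · filter_upwards [eventually_ge_atTop 2] with n hn h
      have hn1 : (1 : ℝ) < n := by exact_mod_cast hn.trans_lt' one_lt_two
      have hL : 0 < Real.log n := Real.log_pos hn1
      exact absurd h (by positivity)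
  exact htarget.congr' (Filter.EventuallyEq.symm hEq) (Filter.EventuallyEq.refl _ _)
end
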